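/- Let $n \geq 2$, $c \in \mathbb{R}$, $\delta > 0$, and let $\mu_1,\dots,\mu_n < 0$ and $\lambda_1,\dots,\lambda_n > 0$ be real numbers. Assume that for every $k$, $-c + \sum_{i \neq k} \mu_i \geq \delta$, and that $-c + 2\sum_{i=1}^n \frac{\mu_i}{\lambda_i} - \sum_{i=1}^n \frac{\mu_i}{\lambda_i^2} \leq \frac{\delta}{2}$. Then for every $k$, $\lambda_k \leq \frac{-4\mu_k}{\delta}$. -/

import Mathlib

theorem stmt_12 (n : ℕ) (hn : 2 ≤ n) (c δ : ℝ) (hδ : 0 < δ)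
    (μ lam : Fin n → ℝ) (hμ : ∀ i, μ i < 0) (hlam : ∀ i, 0 < lam i)
    (hcone : ∀ k : Fin n, δ ≤ -c + ∑ i ∈ Finset.univ.erase k, μ i)
    (hmax : -c + 2 * ∑ i, μ i / lam i - ∑ i, μ i / (lam i) ^ 2 ≤ δ / 2) :
    ∀ k, lam k ≤ -4 * μ k / δ := by
  intro k
  have hE : ∀ i, μ i * (1 / lam i - 1) ^ 2 = μ i / (lam i) ^ 2 - 2 * (μ i / lam i) + μ i := by
    intro i
    have h := (hlam i).ne'
    field_simp
    ring
  have h1 : ∑ i ∈ Finset.univ.erase k, μ i * (1 / lam i - 1) ^ 2 ≤ 0 :=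
    Finset.sum_nonpos fun i _ => mul_nonpos_of_nonpos_of_nonneg (hμ i).le (sq_nonneg _)
  have hA := Finset.sum_erase_eq_sub (f := fun i => μ i / (lam i) ^ 2) (Finset.mem_univ k)
  have hB := Finset.sum_erase_eq_sub (f := fun i => μ i / lam i) (Finset.mem_univ k)
  have h2 : ∑ i ∈ Finset.univ.erase k, μ i * (1 / lam i - 1) ^ 2 =
      ((∑ i, μ i / (lam i) ^ 2) - μ k / (lam k) ^ 2)
      - 2 * ((∑ i, μ i / lam i) - μ k / lam k)
      + ∑ i ∈ Finset.univ.erase k, μ i := by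
    rw [Finset.sum_congr rfl fun i _ => hE i]
    rw [Finset.sum_add_distrib, Finset.sum_sub_distrib, ← Finset.mul_sum, hA, hB]
  have h3 : μ k / (lam k) ^ 2 ≤ 0 :=
    div_nonpos_of_nonpos_of_nonneg (hμ k).le (sq_nonneg _)
  have h4 : 2 * (μ k / lam k) ≤ -(δ / 2) := by
    have := hcone k
    linarith [h1, h2, h3, hmax]
  have hlk := hlam k
  rw [le_div_iff₀ hδ]
  have h5 : μ k / lam k * lam k = μ k := by field_simp
  nlinarith [mul_le_mul_of_nonneg_right h4 hlk.le]
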